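/- Let w(t) = (B/|B|) tanh(t|B|) for some B ≠ 0 (a geodesic of the unit disk through 0), let η₀ ∈ ℂ be constant, and set z(t) = η₀ - w(t)\bar{η₀}. Then (z(t), w(t)) is a geodesic of the Siegel–Jacobi disk: it satisfies μ\bar{η}G₁² = 2kG₃ and μG₁² = -2kG₂, where G₁ = z' + \bar{η}w', G₂ = w'' + 2\bar{w}P^{-1}(w')², G₃ = z'' + 2\bar{w}P^{-1}z'w', P = 1-w\bar{w}, and η = (z+\bar{z}w)/P. In fact along this curve G₁ = 0, G₂ = 0 and G₃ = 0. -/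

import Mathlib

open Complex

private lemma tanh_hasDerivAt (x : ℝ) :
    HasDerivAt Real.tanh (1 - Real.tanh x ^ 2) x := by
  have hc : Real.cosh x ≠ 0 := (Real.cosh_pos x).ne'
  have h : HasDerivAt (fun y => Real.sinh y / Real.cosh y) _ x := (Real.hasDerivAt_sinh x).div (Real.hasDerivAt_cosh x) hc
  have heq : Real.tanh = fun y => Real.sinh y / Real.cosh y := by
    funext y; exact Real.tanh_eq_sinh_div_cosh y
  rw [heq]
  convert h using 1
  have hid := Real.cosh_sq_sub_sinh_sq x
  show 1 - (Real.sinh x / Real.cosh x) ^ 2 = _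
  field_simp

private lemma tanh_sq_lt_one (x : ℝ) : Real.tanh x ^ 2 < 1 := by
  have hc : Real.cosh x ≠ 0 := (Real.cosh_pos x).ne'
  have h1 : Real.sinh x ^ 2 < Real.cosh x ^ 2 := by
    nlinarith [Real.cosh_sq_sub_sinh_sq x]
  rw [Real.tanh_eq_sinh_div_cosh, div_pow]
  rw [div_lt_one (by positivity)]
  exact h1

/-- Let `w(t) = (B/|B|) tanh(t|B|)` (a geodesic of the unit disk through `0`), `η₀ ∈ ℂ`,
and `z(t) = η₀ - w(t) conj η₀`. Then `(z(t), w(t))` is a geodesic of the Siegel–Jacobi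
disk: `μ η̄ G₁² = 2k G₃` and `μ G₁² = -2k G₂`; in fact `G₁ = G₂ = G₃ = 0` along the
curve. -/
theorem siegelJacobi_geodesic (k μ : ℝ) (hk : 0 < k) (hμ : 0 < μ)
    (B : ℂ) (hB : B ≠ 0) (η₀ : ℂ) :
    let w : ℝ → ℂ := fun t => (B / (‖B‖ : ℂ)) * (Real.tanh (t * ‖B‖) : ℂ)
    let z : ℝ → ℂ := fun t => η₀ - w t * starRingEnd ℂ η₀
    let P : ℝ → ℂ := fun t => 1 - w t * starRingEnd ℂ (w t)
    let η : ℝ → ℂ := fun t => (z t + starRingEnd ℂ (z t) * w t) / P t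
    let G₁ : ℝ → ℂ := fun t => deriv z t + starRingEnd ℂ (η t) * deriv w t
    let G₂ : ℝ → ℂ := fun t =>
      deriv (deriv w) t + 2 * starRingEnd ℂ (w t) / P t * (deriv w t) ^ 2
    let G₃ : ℝ → ℂ := fun t =>
      deriv (deriv z) t + 2 * starRingEnd ℂ (w t) / P t * deriv z t * deriv w t
    ∀ t : ℝ,
      G₁ t = 0 ∧ G₂ t = 0 ∧ G₃ t = 0 ∧
      (μ : ℂ) * starRingEnd ℂ (η t) * (G₁ t) ^ 2 = 2 * (k : ℂ) * G₃ t ∧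
      (μ : ℂ) * (G₁ t) ^ 2 = -(2 * (k : ℂ)) * G₂ t := by
  intro w z P η G₁ G₂ G₃ t
  have hb : (0:ℝ) < ‖B‖ := norm_pos_iff.mpr hB
  set b : ℝ := ‖B‖ with hbdef
  set c : ℂ := B / (b : ℂ) with hcdef
  set s : ℝ → ℂ := fun t => ((Real.tanh (t * b) : ℝ) : ℂ) with hsdef
  have hc0 : c ≠ 0 := div_ne_zero hB (by exact_mod_cast hb.ne')
  have hc1 : c * starRingEnd ℂ c = 1 := by
    rw [Complex.mul_conj]
    have hcn : ‖c‖ = 1 := by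
      rw [hcdef, norm_div]
      simp [hbdef, hb.ne']
      exact hB
    have : Complex.normSq c = 1 := by
      rw [Complex.normSq_eq_norm_sq, hcn]; norm_num
    rw [this]; norm_num
  have hcinv : starRingEnd ℂ c = c⁻¹ := eq_inv_of_mul_eq_one_right hc1
  -- conjugates
  have hconjs : ∀ u : ℝ, starRingEnd ℂ (s u) = s u := fun u => Complex.conj_ofReal _
  -- derivative of s
  have hT : ∀ u : ℝ, HasDerivAt s ((b : ℂ) * (1 - s u ^ 2)) u := by
    intro u
    have h1 : HasDerivAt (fun x : ℝ => Real.tanh (x * b))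
        ((1 - Real.tanh (u * b) ^ 2) * b) u := by
      have := (tanh_hasDerivAt (u * b)).comp u (hasDerivAt_mul_const b)
      exact this
    have h2 := h1.ofReal_comp
    convert h2 using 1
    rw [hsdef]
    simp only [Complex.ofReal_mul, Complex.ofReal_sub, Complex.ofReal_one,
      Complex.ofReal_pow]
    ring
  -- w and its derivatives
  have hwdef : w = fun u => c * s u := rfl
  have hw' : ∀ u, HasDerivAt w (c * ((b:ℂ) * (1 - s u ^ 2))) u :=
    fun u => (hT u).const_mul c
  have hderivw : deriv w = fun u => c * ((b:ℂ) * (1 - s u ^ 2)) :=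
    funext fun u => (hw' u).deriv
  have hsq : HasDerivAt (fun u => 1 - s u * s u)
      (-((b:ℂ) * (1 - s t ^ 2) * s t + s t * ((b:ℂ) * (1 - s t ^ 2)))) t :=
    ((hT t).mul (hT t)).const_sub 1
  have hW2fun : (fun u => c * ((b:ℂ) * (1 - s u ^ 2)))
      = fun u => c * (b:ℂ) * (1 - s u * s u) := by
    funext u; ring
  have hw'' : HasDerivAt (deriv w)
      (c * (b:ℂ) * -((b:ℂ) * (1 - s t ^ 2) * s t + s t * ((b:ℂ) * (1 - s t ^ 2)))) t := by
    rw [hderivw, hW2fun]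
    exact hsq.const_mul (c * (b:ℂ))
  have hderivw2 : deriv (deriv w) t
      = c * (b:ℂ) * -((b:ℂ) * (1 - s t ^ 2) * s t + s t * ((b:ℂ) * (1 - s t ^ 2))) :=
    hw''.deriv
  -- z and its derivatives
  have hz' : ∀ u, HasDerivAt z (-(c * ((b:ℂ) * (1 - s u ^ 2)) * starRingEnd ℂ η₀)) u :=
    fun u => ((hw' u).mul_const (starRingEnd ℂ η₀)).const_sub η₀
  have hderivz : deriv z = fun u => -(c * ((b:ℂ) * (1 - s u ^ 2)) * starRingEnd ℂ η₀) :=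
    funext fun u => (hz' u).deriv
  have hZ2fun : (fun u => -(c * ((b:ℂ) * (1 - s u ^ 2)) * starRingEnd ℂ η₀))
      = fun u => -(c * (b:ℂ) * starRingEnd ℂ η₀) * (1 - s u * s u) := by
    funext u; ring
  have hz'' : HasDerivAt (deriv z)
      (-(c * (b:ℂ) * starRingEnd ℂ η₀) *
        -((b:ℂ) * (1 - s t ^ 2) * s t + s t * ((b:ℂ) * (1 - s t ^ 2)))) t := by
    rw [hderivz, hZ2fun]
    exact hsq.const_mul _
  have hderivz2 : deriv (deriv z) t
      = -(c * (b:ℂ) * starRingEnd ℂ η₀) *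
        -((b:ℂ) * (1 - s t ^ 2) * s t + s t * ((b:ℂ) * (1 - s t ^ 2))) :=
    hz''.deriv
  -- P and nonvanishing
  have hconjw : starRingEnd ℂ (w t) = starRingEnd ℂ c * s t := by
    rw [hwdef]; simp [map_mul, hconjs]
  have hP : P t = 1 - s t ^ 2 := by
    show 1 - w t * starRingEnd ℂ (w t) = _
    rw [hconjw, hwdef]
    have : c * s t * (starRingEnd ℂ c * s t) = (c * starRingEnd ℂ c) * s t ^ 2 := by ring
    rw [this, hc1]; ring
  have hs2 : s t ^ 2 = ((Real.tanh (t * b) ^ 2 : ℝ) : ℂ) := by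
    rw [hsdef]; push_cast; ring
  have hPne : (1 : ℂ) - s t ^ 2 ≠ 0 := by
    rw [hs2]
    intro h
    have h1 : ((Real.tanh (t * b) ^ 2 : ℝ) : ℂ) = 1 := (sub_eq_zero.mp h).symm
    have h2 : (Real.tanh (t * b) ^ 2 : ℝ) = 1 := by exact_mod_cast h1
    have := tanh_sq_lt_one (t * b)
    linarith
  -- η is constant
  have hη : η t = η₀ := by
    show (z t + starRingEnd ℂ (z t) * w t) / P t = η₀
    have hconjz : starRingEnd ℂ (z t) = starRingEnd ℂ η₀ - starRingEnd ℂ (w t) * η₀ := by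
      show starRingEnd ℂ (η₀ - w t * starRingEnd ℂ η₀) = _
      simp [map_sub, map_mul]
    have hnum : z t + starRingEnd ℂ (z t) * w t = η₀ * P t := by
      show (η₀ - w t * starRingEnd ℂ η₀) + starRingEnd ℂ (z t) * w t
          = η₀ * (1 - w t * starRingEnd ℂ (w t))
      rw [hconjz]; ring
    rw [hnum, hP, mul_div_assoc, div_self hPne, mul_one]
  -- G₁ = 0
  have hG1 : G₁ t = 0 := by
    show deriv z t + starRingEnd ℂ (η t) * deriv w t = 0
    rw [hη, hderivz, hderivw]
    ring
  -- G₂ = 0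
  have hG2 : G₂ t = 0 := by
    show deriv (deriv w) t + 2 * starRingEnd ℂ (w t) / P t * (deriv w t) ^ 2 = 0
    rw [hderivw2, hderivw, hconjw, hP, hcinv]
    field_simp
    ring
  -- G₃ = 0
  have hG3 : G₃ t = 0 := by
    show deriv (deriv z) t + 2 * starRingEnd ℂ (w t) / P t * deriv z t * deriv w t = 0
    rw [hderivz2, hderivz, hderivw, hconjw, hP, hcinv]
    field_simp
    ring
  refine ⟨hG1, hG2, hG3, ?_, ?_⟩
  · rw [hG1, hG3]; ring
  · rw [hG1, hG2]; ring
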